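/- (Dimension theorem) Let U and W be two finite-dimensional hypersubspaces of a strongly left distributive hypervector space (V, #, ∗) over a hyperfield (F, ⊕, ·). Then U # W = ⋃ { α # β : α ∈ U, β ∈ W } is a finite-dimensional hypersubspace of V, and dim(U # W) = dim(U) + dim(W) − dim(U ∩ W). -/

import Mathlib

universe u v

/-- A hyperfield: `(F, ⊕, ·)` where `(F, ⊕)` is a commutative hypergroup with zero
element `zero` (each `a` having a unique additive inverse `neg a`, and satisfying
reversibility), and `·` is an associative commutative multiplication distributing
over `⊕` from both sides, with `a·0 = 0·a = 0`, an identity `one` and multiplicative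
inverses for nonzero elements. -/
structure Hyperfield (F : Type u) where
  add : F → F → Set F
  add_nonempty : ∀ a b, (add a b).Nonempty
  add_comm : ∀ a b, add a b = add b a
  add_assoc : ∀ a b c, (⋃ t ∈ add b c, add a t) = ⋃ t ∈ add a b, add t c
  zero : F
  neg : F → F
  neg_spec : ∀ a, zero ∈ add a (neg a) ∧ zero ∈ add (neg a) a
  neg_unique : ∀ a b, zero ∈ add a b → zero ∈ add b a → b = neg a
  reversible : ∀ a b c, a ∈ add b c → b ∈ add a (neg c)
  mul : F → F → F
  mul_assoc : ∀ a b c, mul (mul a b) c = mul a (mul b c)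
  left_distrib : ∀ a b c, (mul a) '' (add b c) = add (mul a b) (mul a c)
  right_distrib : ∀ a b c, (fun t => mul t a) '' (add b c) = add (mul b a) (mul c a)
  mul_zero : ∀ a, mul a zero = zero
  zero_mul : ∀ a, mul zero a = zero
  one : F
  mul_one : ∀ a, mul a one = a
  one_ne_zero : one ≠ zero
  mul_comm : ∀ a b, mul a b = mul b a
  exists_inv : ∀ a, a ≠ zero → ∃ b, mul a b = one

/-- A hypervector space `(V, #, ∗)` over a hyperfield `K` on `F`:
`(V, #)` is a commutative hypergroup with zero vector `vzero`, and
`∗ : F × V → P*(V)` satisfies (i) `a ∗ (α # β) ⊆ a∗α # a∗β`,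
(ii) `(a ⊕ b) ∗ α ⊆ a∗α # b∗α`, (iii) `(a·b) ∗ α = a ∗ (b ∗ α)`,
(iv) `1 ∗ α = {α}` and `0 ∗ α = {θ}`. -/
structure HypervectorSpace (F : Type u) (V : Type v) (K : Hyperfield F) where
  vadd : V → V → Set V
  vadd_nonempty : ∀ x y, (vadd x y).Nonempty
  vadd_comm : ∀ x y, vadd x y = vadd y x
  vadd_assoc : ∀ x y z, (⋃ t ∈ vadd y z, vadd x t) = ⋃ t ∈ vadd x y, vadd t z
  vzero : V
  vneg : V → V
  vneg_spec : ∀ x, vzero ∈ vadd x (vneg x) ∧ vzero ∈ vadd (vneg x) x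
  vneg_unique : ∀ x y, vzero ∈ vadd x y → vzero ∈ vadd y x → y = vneg x
  vreversible : ∀ x y z, x ∈ vadd y z → y ∈ vadd x (vneg z)
  smul : F → V → Set V
  smul_nonempty : ∀ a x, (smul a x).Nonempty
  smul_vadd : ∀ a x y, (⋃ t ∈ vadd x y, smul a t) ⊆ ⋃ u ∈ smul a x, ⋃ w ∈ smul a y, vadd u w
  add_smul : ∀ a b x, (⋃ t ∈ K.add a b, smul t x) ⊆ ⋃ u ∈ smul a x, ⋃ w ∈ smul b x, vadd u w
  mul_smul : ∀ a b x, smul (K.mul a b) x = ⋃ t ∈ smul b x, smul a t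
  one_smul : ∀ x, smul K.one x = {x}
  zero_smul : ∀ x, smul K.zero x = {vzero}

namespace HypervectorSpace

variable {F : Type u} {V : Type v} {K : Hyperfield F}

/-- The hyperoperation `#` extended to subsets: `A # B = ⋃_{a ∈ A, b ∈ B} a # b`. -/
def setVadd (H : HypervectorSpace F V K) (A B : Set V) : Set V :=
  ⋃ a ∈ A, ⋃ b ∈ B, H.vadd a b

/-- A subset `W` of a hypervector space is a hypersubspace if it is closed under `#`
and `∗`, contains the zero vector, and contains additive inverses. -/
def IsHypersubspace (H : HypervectorSpace F V K) (W : Set V) : Prop :=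
  (∀ α ∈ W, ∀ β ∈ W, H.vadd α β ⊆ W) ∧
  (∀ a : F, ∀ α ∈ W, H.smul a α ⊆ W) ∧
  H.vzero ∈ W ∧
  (∀ α ∈ W, H.vneg α ∈ W)

/-- Iterated hyperoperation `A₁ # A₂ # ... # Aₙ` on a list of subsets
(by convention the empty hypersum is `{θ}`). -/
def hsum (H : HypervectorSpace F V K) : List (Set V) → Set V
  | [] => {H.vzero}
  | [A] => A
  | A :: B :: rest => H.setVadd A (HypervectorSpace.hsum H (B :: rest))

/-- The linear combination set `a₁∗α₁ # a₂∗α₂ # ... # aₙ∗αₙ`. -/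
def lincomb (H : HypervectorSpace F V K) {n : ℕ} (a : Fin n → F) (α : Fin n → V) : Set V :=
  H.hsum (List.ofFn fun i => H.smul (a i) (α i))

/-- The hyperlinear span `HL(α₁, ..., αₙ) = ⋃ { a₁∗α₁ # ... # aₙ∗αₙ : a₁, ..., aₙ ∈ F }`. -/
def HL (H : HypervectorSpace F V K) {n : ℕ} (α : Fin n → V) : Set V :=
  ⋃ a : Fin n → F, H.lincomb a α

/-- The family `α₁, ..., αₙ` is linearly dependent if `θ ∈ a₁∗α₁ # ... # aₙ∗αₙ`
for some scalars `a₁, ..., aₙ`, not all zero. -/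
def LinDep (H : HypervectorSpace F V K) {n : ℕ} (α : Fin n → V) : Prop :=
  ∃ a : Fin n → F, (∃ i, a i ≠ K.zero) ∧ H.vzero ∈ H.lincomb a α

/-- Strongly left distributive: equality `(a ⊕ b) ∗ α = a∗α # b∗α`. -/
def StronglyLeftDistrib (H : HypervectorSpace F V K) : Prop :=
  ∀ (a b : F) (x : V),
    (⋃ t ∈ K.add a b, H.smul t x) = ⋃ u ∈ H.smul a x, ⋃ w ∈ H.smul b x, H.vadd u w

/-- The set of all finite linear combinations of elements of `S`. -/
def HLSet (H : HypervectorSpace F V K) (S : Set V) : Set V :=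
  ⋃ n : ℕ, ⋃ β : Fin n → V, ⋃ (_ : ∀ i, β i ∈ S), H.HL β

/-- A set `S` is linearly independent if every finite family of distinct elements
of `S` is linearly independent. -/
def LinIndepSet (H : HypervectorSpace F V K) (S : Set V) : Prop :=
  ∀ (n : ℕ) (β : Fin n → V), Function.Injective β → (∀ i, β i ∈ S) → ¬ H.LinDep β

/-- `S` is a basis of the hypersubspace `U`: `S ⊆ U`, `S` is linearly independent,
and every element of `U` is a finite linear combination of elements of `S`. -/
def IsBasisOf (H : HypervectorSpace F V K) (S U : Set V) : Prop :=
  S ⊆ U ∧ H.LinIndepSet S ∧ U ⊆ H.HLSet S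

end HypervectorSpace

namespace Hyperfield

variable {F : Type u} (K : Hyperfield F)

theorem neg_neg (a : F) : K.neg (K.neg a) = a :=
  ((K.neg_unique (K.neg a) a (K.neg_spec a).2 (K.neg_spec a).1)).symm

theorem zero_add (a : F) : K.add K.zero a = {a} := by
  ext b
  constructor
  · intro h
    have h1 : K.zero ∈ K.add b (K.neg a) := K.reversible b K.zero a h
    have h2 : K.zero ∈ K.add (K.neg a) b := by rwa [K.add_comm] at h1
    have := K.neg_unique (K.neg a) b h2 h1
    simpa [K.neg_neg] using this
  · intro h
    rcases h with rfl
    have h1 : K.zero ∈ K.add b (K.neg b) := (K.neg_spec b).1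
    have := K.reversible K.zero b (K.neg b) h1
    rwa [K.neg_neg] at this

theorem add_zero (a : F) : K.add a K.zero = {a} := by
  rw [K.add_comm]; exact K.zero_add a

theorem neg_zero : K.neg K.zero = K.zero := by
  have h : K.zero ∈ K.add K.zero K.zero := by rw [K.zero_add]; rfl
  exact (K.neg_unique K.zero K.zero h h).symm

theorem neg_one_mul (a : F) : K.mul (K.neg K.one) a = K.neg a := by
  have h0 : K.zero ∈ K.add K.one (K.neg K.one) := (K.neg_spec K.one).1
  have hd := K.right_distrib a K.one (K.neg K.one)
  have h1 : K.zero ∈ K.add (K.mul K.one a) (K.mul (K.neg K.one) a) := by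
    rw [← hd]
    exact ⟨K.zero, h0, K.zero_mul a⟩
  have hone : K.mul K.one a = a := by rw [K.mul_comm, K.mul_one]
  rw [hone] at h1
  have h2 : K.zero ∈ K.add (K.mul (K.neg K.one) a) a := by rwa [K.add_comm] at h1
  exact K.neg_unique a _ h1 h2

theorem neg_one_ne_zero : K.neg K.one ≠ K.zero := by
  intro h
  have h0 : K.zero ∈ K.add K.one (K.neg K.one) := (K.neg_spec K.one).1
  rw [h, K.add_zero] at h0
  exact K.one_ne_zero h0.symm

end Hyperfield

namespace HypervectorSpace

variable {F : Type u} {V : Type v} {K : Hyperfield F} (H : HypervectorSpace F V K)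

theorem vneg_vneg (x : V) : H.vneg (H.vneg x) = x :=
  ((H.vneg_unique (H.vneg x) x (H.vneg_spec x).2 (H.vneg_spec x).1)).symm

theorem eq_vneg {x y : V} (h : H.vzero ∈ H.vadd x y) : y = H.vneg x :=
  H.vneg_unique x y h (by rwa [H.vadd_comm] at h)

theorem vzero_vadd (x : V) : H.vadd H.vzero x = {x} := by
  ext b
  constructor
  · intro h
    have h1 : H.vzero ∈ H.vadd b (H.vneg x) := H.vreversible b H.vzero x h
    have h2 := congrArg H.vneg (H.eq_vneg h1)
    rw [H.vneg_vneg, H.vneg_vneg] at h2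
    exact h2.symm
  · intro h
    rcases h with rfl
    have h1 := (H.vneg_spec b).1
    have := H.vreversible H.vzero b (H.vneg b) h1
    rwa [H.vneg_vneg] at this

theorem vadd_vzero (x : V) : H.vadd x H.vzero = {x} := by
  rw [H.vadd_comm]; exact H.vzero_vadd x

theorem vneg_vzero : H.vneg H.vzero = H.vzero := by
  have h : H.vzero ∈ H.vadd H.vzero H.vzero := by rw [H.vzero_vadd]; rfl
  exact (H.eq_vneg h).symm

end HypervectorSpace
namespace HypervectorSpace

variable {F : Type u} {V : Type v} {K : Hyperfield F} (H : HypervectorSpace F V K)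

theorem smul_vzero (a : F) : H.smul a H.vzero = {H.vzero} := by
  have h := H.mul_smul a K.zero H.vzero
  rw [K.mul_zero, H.zero_smul] at h
  simpa using h.symm

theorem mem_setVadd {A B : Set V} {x : V} :
    x ∈ H.setVadd A B ↔ ∃ a ∈ A, ∃ b ∈ B, x ∈ H.vadd a b := by
  simp [setVadd]

theorem vadd_subset_setVadd {A B : Set V} {a b : V} (ha : a ∈ A) (hb : b ∈ B) :
    H.vadd a b ⊆ H.setVadd A B := fun x hx => H.mem_setVadd.2 ⟨a, ha, b, hb, hx⟩

theorem setVadd_mono {A B A' B' : Set V} (hA : A ⊆ A') (hB : B ⊆ B') :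
    H.setVadd A B ⊆ H.setVadd A' B' := by
  intro x hx
  obtain ⟨a, ha, b, hb, hx⟩ := H.mem_setVadd.1 hx
  exact H.mem_setVadd.2 ⟨a, hA ha, b, hB hb, hx⟩

theorem setVadd_comm' (A B : Set V) : H.setVadd A B = H.setVadd B A := by
  ext x
  simp only [mem_setVadd]
  constructor <;> rintro ⟨a, ha, b, hb, hx⟩ <;> exact ⟨b, hb, a, ha, by rwa [H.vadd_comm]⟩

theorem mem_assoc_iff {a b c x : V} :
    (∃ t ∈ H.vadd a b, x ∈ H.vadd t c) ↔ ∃ t ∈ H.vadd b c, x ∈ H.vadd a t := by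
  have h := H.vadd_assoc a b c
  constructor
  · rintro ⟨t, ht, hx⟩
    have : x ∈ ⋃ t ∈ H.vadd a b, H.vadd t c := Set.mem_biUnion ht hx
    rw [← h] at this
    simpa [Set.mem_iUnion] using this
  · rintro ⟨t, ht, hx⟩
    have : x ∈ ⋃ t ∈ H.vadd b c, H.vadd a t := Set.mem_biUnion ht hx
    rw [h] at this
    simpa [Set.mem_iUnion] using this

theorem setVadd_assoc' (A B C : Set V) :
    H.setVadd (H.setVadd A B) C = H.setVadd A (H.setVadd B C) := by
  ext x
  simp only [mem_setVadd]
  constructor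
  · rintro ⟨t, ⟨a, ha, b, hb, ht⟩, c, hc, hx⟩
    obtain ⟨s, hs, hxs⟩ := H.mem_assoc_iff.1 ⟨t, ht, hx⟩
    exact ⟨a, ha, s, ⟨b, hb, c, hc, hs⟩, hxs⟩
  · rintro ⟨a, ha, s, ⟨b, hb, c, hc, hs⟩, hx⟩
    obtain ⟨t, ht, hxt⟩ := H.mem_assoc_iff.2 ⟨s, hs, hx⟩
    exact ⟨t, ⟨a, ha, b, hb, ht⟩, c, hc, hxt⟩

theorem setVadd_left_comm (A B C : Set V) :
    H.setVadd A (H.setVadd B C) = H.setVadd B (H.setVadd A C) := by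
  rw [← H.setVadd_assoc', H.setVadd_comm' A B, H.setVadd_assoc']

theorem setVadd_vzero (A : Set V) : H.setVadd A {H.vzero} = A := by
  ext x
  simp only [mem_setVadd]
  constructor
  · rintro ⟨a, ha, b, rfl, hx⟩
    rw [H.vadd_vzero] at hx
    rcases hx with rfl
    exact ha
  · intro hx
    exact ⟨x, hx, H.vzero, rfl, by rw [H.vadd_vzero]; rfl⟩

theorem vzero_setVadd (A : Set V) : H.setVadd {H.vzero} A = A := by
  rw [H.setVadd_comm']; exact H.setVadd_vzero A

theorem setVadd_nonempty {A B : Set V} (hA : A.Nonempty) (hB : B.Nonempty) :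
    (H.setVadd A B).Nonempty := by
  obtain ⟨a, ha⟩ := hA
  obtain ⟨b, hb⟩ := hB
  obtain ⟨x, hx⟩ := H.vadd_nonempty a b
  exact ⟨x, H.mem_setVadd.2 ⟨a, ha, b, hb, hx⟩⟩

theorem setVadd_biUnion_left {ι : Type u} (s : Set ι) (f : ι → Set V) (B : Set V) :
    H.setVadd (⋃ i ∈ s, f i) B = ⋃ i ∈ s, H.setVadd (f i) B := by
  ext x
  simp only [mem_setVadd, Set.mem_iUnion]
  constructor
  · rintro ⟨a, ⟨i, hi, ha⟩, b, hb, hx⟩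
    exact ⟨i, hi, a, ha, b, hb, hx⟩
  · rintro ⟨i, hi, a, ha, b, hb, hx⟩
    exact ⟨a, ⟨i, hi, ha⟩, b, hb, hx⟩

/-- scalar action on sets -/
def ssm (a : F) (A : Set V) : Set V := ⋃ x ∈ A, H.smul a x

theorem mem_ssm {a : F} {A : Set V} {y : V} :
    y ∈ H.ssm a A ↔ ∃ x ∈ A, y ∈ H.smul a x := by simp [ssm]

theorem ssm_singleton (a : F) (x : V) : H.ssm a {x} = H.smul a x := by
  simp [ssm]

theorem ssm_smul (a b : F) (x : V) : H.ssm a (H.smul b x) = H.smul (K.mul a b) x :=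
  (H.mul_smul a b x).symm

theorem ssm_setVadd (a : F) (A B : Set V) :
    H.ssm a (H.setVadd A B) ⊆ H.setVadd (H.ssm a A) (H.ssm a B) := by
  intro y hy
  obtain ⟨x, hx, hy⟩ := H.mem_ssm.1 hy
  obtain ⟨u, hu, w, hw, hx⟩ := H.mem_setVadd.1 hx
  have h := H.smul_vadd a u w
  have : y ∈ ⋃ t ∈ H.vadd u w, H.smul a t := Set.mem_biUnion hx hy
  have := h this
  simp only [Set.mem_iUnion] at this
  obtain ⟨p, hp, q, hq, hy'⟩ := this
  exact H.mem_setVadd.2 ⟨p, H.mem_ssm.2 ⟨u, hu, hp⟩, q, H.mem_ssm.2 ⟨w, hw, hq⟩, hy'⟩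

theorem ssm_mono {a : F} {A B : Set V} (h : A ⊆ B) : H.ssm a A ⊆ H.ssm a B := by
  intro y hy
  obtain ⟨x, hx, hy⟩ := H.mem_ssm.1 hy
  exact H.mem_ssm.2 ⟨x, h hx, hy⟩

theorem neg_mem_neg_one_smul (hsld : H.StronglyLeftDistrib) (x : V) :
    H.vneg x ∈ H.smul (K.neg K.one) x := by
  have h := hsld K.one (K.neg K.one) x
  have hz : H.vzero ∈ ⋃ t ∈ K.add K.one (K.neg K.one), H.smul t x := by
    refine Set.mem_biUnion (K.neg_spec K.one).1 ?_
    rw [H.zero_smul]; rfl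
  rw [h, H.one_smul] at hz
  simp only [Set.mem_iUnion, Set.mem_singleton_iff] at hz
  obtain ⟨u, rfl, w, hw, hv⟩ := hz
  rwa [← H.eq_vneg hv]

end HypervectorSpace
namespace HypervectorSpace

variable {F : Type u} {V : Type v} {K : Hyperfield F} (H : HypervectorSpace F V K)

theorem hsum_cons (A : Set V) (l : List (Set V)) :
    H.hsum (A :: l) = H.setVadd A (H.hsum l) := by
  cases l with
  | nil => simp only [hsum, H.setVadd_vzero]
  | cons B r => rfl

theorem hsum_append (l₁ l₂ : List (Set V)) :
    H.hsum (l₁ ++ l₂) = H.setVadd (H.hsum l₁) (H.hsum l₂) := by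
  induction l₁ with
  | nil => simp only [List.nil_append, hsum, H.vzero_setVadd]
  | cons A r ih =>
      rw [List.cons_append, H.hsum_cons, ih, H.hsum_cons, H.setVadd_assoc']

theorem hsum_perm {l l' : List (Set V)} (hp : l.Perm l') : H.hsum l = H.hsum l' := by
  induction hp with
  | nil => rfl
  | cons A _ ih => rw [H.hsum_cons, H.hsum_cons, ih]
  | swap A B r =>
      rw [H.hsum_cons, H.hsum_cons, H.hsum_cons, H.hsum_cons, H.setVadd_left_comm]
  | trans _ _ ih1 ih2 => rw [ih1, ih2]

/-- linear combination of a list of (coefficient, vector) pairs -/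
def lc (l : List (F × V)) : Set V := H.hsum (l.map fun p => H.smul p.1 p.2)

theorem lc_nil : H.lc ([] : List (F × V)) = {H.vzero} := rfl

theorem lc_cons (p : F × V) (l : List (F × V)) :
    H.lc (p :: l) = H.setVadd (H.smul p.1 p.2) (H.lc l) := by
  rw [lc, List.map_cons, H.hsum_cons]; rfl

theorem lc_append (l₁ l₂ : List (F × V)) :
    H.lc (l₁ ++ l₂) = H.setVadd (H.lc l₁) (H.lc l₂) := by
  rw [lc, List.map_append, H.hsum_append]; rfl

theorem lc_perm {l l' : List (F × V)} (hp : l.Perm l') : H.lc l = H.lc l' :=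
  H.hsum_perm (hp.map _)

theorem lc_nonempty (l : List (F × V)) : (H.lc l).Nonempty := by
  induction l with
  | nil => exact ⟨H.vzero, rfl⟩
  | cons p r ih => rw [H.lc_cons]; exact H.setVadd_nonempty (H.smul_nonempty _ _) ih

theorem lc_cons_zero (x : V) (l : List (F × V)) :
    H.lc ((K.zero, x) :: l) = H.lc l := by
  rw [H.lc_cons, H.zero_smul, H.vzero_setVadd]

theorem lc_zero {l : List (F × V)} (h : ∀ p ∈ l, p.1 = K.zero) :
    H.lc l = {H.vzero} := by
  induction l with
  | nil => rfl
  | cons p r ih =>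
      have hp : p.1 = K.zero := h p (List.mem_cons_self)
      rw [H.lc_cons, hp, H.zero_smul, H.vzero_setVadd]
      exact ih fun q hq => h q (List.mem_cons_of_mem p hq)

theorem ssm_lc (s : F) (l : List (F × V)) :
    H.ssm s (H.lc l) ⊆ H.lc (l.map fun p => (K.mul s p.1, p.2)) := by
  induction l with
  | nil =>
      rw [H.lc_nil, H.ssm_singleton, H.smul_vzero, List.map_nil, H.lc_nil]
  | cons p r ih =>
      rw [H.lc_cons, List.map_cons, H.lc_cons]
      refine (H.ssm_setVadd s _ _).trans ?_
      rw [H.ssm_smul]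
      exact H.setVadd_mono (fun y hy => hy) ih

theorem neg_mem_lc (hsld : H.StronglyLeftDistrib) {x : V} {l : List (F × V)}
    (hx : x ∈ H.lc l) :
    H.vneg x ∈ H.lc (l.map fun p => (K.mul (K.neg K.one) p.1, p.2)) := by
  have h1 : H.vneg x ∈ H.ssm (K.neg K.one) (H.lc l) :=
    H.mem_ssm.2 ⟨x, hx, H.neg_mem_neg_one_smul hsld x⟩
  exact H.ssm_lc _ l h1

theorem lc_subset_subspace {U : Set V} (hU : H.IsHypersubspace U) {l : List (F × V)}
    (h : ∀ p ∈ l, p.2 ∈ U) : H.lc l ⊆ U := by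
  induction l with
  | nil =>
      intro x hx
      rcases hx with rfl
      exact hU.2.2.1
  | cons p r ih =>
      rw [H.lc_cons]
      intro x hx
      obtain ⟨u, hu, w, hw, hx⟩ := H.mem_setVadd.1 hx
      have hu' : u ∈ U := hU.2.1 p.1 p.2 (h p (List.mem_cons_self)) hu
      have hw' : w ∈ U := ih (fun q hq => h q (List.mem_cons_of_mem p hq)) hw
      exact hU.1 u hu' w hw' hx

theorem lc_merge (hsld : H.StronglyLeftDistrib) (a b : F) (x : V) (l : List (F × V)) :
    H.lc ((a, x) :: (b, x) :: l) = ⋃ t ∈ K.add a b, H.lc ((t, x) :: l) := by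
  rw [H.lc_cons, H.lc_cons, ← H.setVadd_assoc']
  have h1 : H.setVadd (H.smul a x) (H.smul b x) = ⋃ t ∈ K.add a b, H.smul t x :=
    (hsld a b x).symm
  rw [h1, H.setVadd_biUnion_left]
  refine Set.iUnion₂_congr fun t ht => ?_
  rw [H.lc_cons]

end HypervectorSpace
namespace HypervectorSpace

variable {F : Type u} {V : Type v} {K : Hyperfield F} (H : HypervectorSpace F V K)

/-- span of a set, via lists -/
def spn (S : Set V) : Set V :=
  {x | ∃ l : List (F × V), (∀ p ∈ l, p.2 ∈ S) ∧ x ∈ H.lc l}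

theorem lc_singleton_one (x : V) : H.lc [(K.one, x)] = {x} := by
  rw [H.lc_cons, H.lc_nil]
  simp only [H.one_smul, H.setVadd_vzero]

theorem subset_spn (S : Set V) : S ⊆ H.spn S := by
  intro x hx
  refine ⟨[(K.one, x)], ?_, ?_⟩
  · rintro p hp
    simp only [List.mem_singleton] at hp
    rw [hp]
    exact hx
  · rw [H.lc_singleton_one]; rfl

theorem vzero_mem_spn (S : Set V) : H.vzero ∈ H.spn S :=
  ⟨[], by simp, rfl⟩

theorem spn_mono {S T : Set V} (h : S ⊆ T) : H.spn S ⊆ H.spn T := by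
  rintro x ⟨l, hl, hx⟩
  exact ⟨l, fun p hp => h (hl p hp), hx⟩

theorem vadd_subset_spn {S : Set V} {x y : V} (hx : x ∈ H.spn S) (hy : y ∈ H.spn S) :
    H.vadd x y ⊆ H.spn S := by
  obtain ⟨l₁, hl₁, hx⟩ := hx
  obtain ⟨l₂, hl₂, hy⟩ := hy
  intro z hz
  refine ⟨l₁ ++ l₂, ?_, ?_⟩
  · intro p hp
    rcases List.mem_append.1 hp with h | h
    · exact hl₁ p h
    · exact hl₂ p h
  · rw [H.lc_append]
    exact H.vadd_subset_setVadd hx hy hz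

theorem smul_subset_spn {S : Set V} {x : V} (a : F) (hx : x ∈ H.spn S) :
    H.smul a x ⊆ H.spn S := by
  obtain ⟨l, hl, hx⟩ := hx
  intro z hz
  refine ⟨l.map fun p => (K.mul a p.1, p.2), ?_, ?_⟩
  · intro p hp
    obtain ⟨q, hq, rfl⟩ := List.mem_map.1 hp
    exact hl q hq
  · exact H.ssm_lc a l (H.mem_ssm.2 ⟨x, hx, hz⟩)

theorem vneg_mem_spn (hsld : H.StronglyLeftDistrib) {S : Set V} {x : V}
    (hx : x ∈ H.spn S) : H.vneg x ∈ H.spn S := by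
  have := H.smul_subset_spn (K.neg K.one) hx
  exact this (H.neg_mem_neg_one_smul hsld x)

theorem spn_isSubspace (hsld : H.StronglyLeftDistrib) (S : Set V) :
    H.IsHypersubspace (H.spn S) :=
  ⟨fun _ hx _ hy => H.vadd_subset_spn hx hy,
   fun a _ hx => H.smul_subset_spn a hx,
   H.vzero_mem_spn S,
   fun _ hx => H.vneg_mem_spn hsld hx⟩

theorem lc_subset_spn {T : Set V} {l : List (F × V)} (h : ∀ p ∈ l, p.2 ∈ H.spn T) :
    H.lc l ⊆ H.spn T := by
  induction l with
  | nil =>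
      intro x hx
      rcases hx with rfl
      exact H.vzero_mem_spn T
  | cons p r ih =>
      rw [H.lc_cons]
      intro x hx
      obtain ⟨u, hu, w, hw, hx⟩ := H.mem_setVadd.1 hx
      have hu' : u ∈ H.spn T :=
        H.smul_subset_spn p.1 (h p (List.mem_cons_self)) hu
      have hw' : w ∈ H.spn T := ih (fun q hq => h q (List.mem_cons_of_mem p hq)) hw
      exact H.vadd_subset_spn hu' hw' hx

theorem spn_le_spn {S T : Set V} (h : S ⊆ H.spn T) : H.spn S ⊆ H.spn T := by
  rintro x ⟨l, hl, hx⟩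
  exact H.lc_subset_spn (fun p hp => h (hl p hp)) hx

theorem spn_subset_subspace {S U : Set V} (hU : H.IsHypersubspace U) (h : S ⊆ U) :
    H.spn S ⊆ U := by
  rintro x ⟨l, hl, hx⟩
  exact H.lc_subset_subspace hU (fun p hp => h (hl p hp)) hx

end HypervectorSpace
namespace HypervectorSpace

variable {F : Type u} {V : Type v} {K : Hyperfield F} (H : HypervectorSpace F V K)

/-- every element of the span has a representation with distinct vectors -/
theorem exists_nodup_lc (hsld : H.StronglyLeftDistrib) {S : Set V} {x : V}
    (hx : x ∈ H.spn S) :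
    ∃ m : List (F × V), (∀ p ∈ m, p.2 ∈ S) ∧ (m.map Prod.snd).Nodup ∧ x ∈ H.lc m := by
  letI : DecidableEq (F × V) := Classical.decEq _
  obtain ⟨l, hl, hx⟩ := hx
  revert hl hx
  induction l generalizing x with
  | nil =>
      intro hl hx
      exact ⟨[], by simp, by simp, hx⟩
  | cons q r ih =>
      intro hl hx
      rw [H.lc_cons] at hx
      obtain ⟨u, hu, w, hw, hx⟩ := H.mem_setVadd.1 hx
      obtain ⟨m, hm, hmnd, hwm⟩ := ih (fun p hp => hl p (List.mem_cons_of_mem q hp)) hw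
      have hx' : x ∈ H.lc ((q.1, q.2) :: m) := by
        rw [H.lc_cons]
        exact H.mem_setVadd.2 ⟨u, hu, w, hwm, hx⟩
      by_cases hqm : q.2 ∈ m.map Prod.snd
      · -- merge the duplicate
        obtain ⟨p, hp, hpq⟩ := List.mem_map.1 hqm
        have hperm : m.Perm (p :: m.erase p) := List.perm_cons_erase hp
        have hx'' : x ∈ H.lc ((q.1, q.2) :: (p.1, q.2) :: m.erase p) := by
          have heq : H.lc ((q.1, q.2) :: m) = H.lc ((q.1, q.2) :: (p.1, q.2) :: m.erase p) := by
            refine H.lc_perm (List.Perm.cons _ ?_)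
            rw [← hpq]
            exact hperm
          rwa [heq] at hx'
        rw [H.lc_merge hsld] at hx''
        simp only [Set.mem_iUnion] at hx''
        obtain ⟨t, ht, hxt⟩ := hx''
        refine ⟨(t, q.2) :: m.erase p, ?_, ?_, hxt⟩
        · rintro p' hp'
          rcases List.mem_cons.1 hp' with rfl | hp'
          · exact hl q (List.mem_cons_self)
          · exact hm p' ((List.erase_sublist (l := m) (a := p)).subset hp')
        · have hnd' : (m.map Prod.snd).Perm (q.2 :: (m.erase p).map Prod.snd) := by
            have h2 := hperm.map Prod.snd
            rw [List.map_cons, hpq] at h2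
            exact h2
          have h3 := hmnd.perm hnd'
          simpa using h3
      · refine ⟨(q.1, q.2) :: m, ?_, ?_, hx'⟩
        · rintro p' hp'
          rcases List.mem_cons.1 hp' with rfl | hp'
          · exact hl q (List.mem_cons_self)
          · exact hm p' hp'
        · rw [List.map_cons, List.nodup_cons]
          exact ⟨hqm, hmnd⟩

/-- drop zero coefficients, keeping a sublist -/
theorem exists_nonzero_lc {l : List (F × V)} {x : V} (hx : x ∈ H.lc l) :
    ∃ m, m.Sublist l ∧ (∀ p ∈ m, p.1 ≠ K.zero) ∧ x ∈ H.lc m := by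
  induction l generalizing x with
  | nil => exact ⟨[], List.Sublist.refl _, by simp, hx⟩
  | cons q r ih =>
      rw [H.lc_cons] at hx
      obtain ⟨u, hu, w, hw, hx⟩ := H.mem_setVadd.1 hx
      obtain ⟨m, hms, hmz, hwm⟩ := ih hw
      by_cases hq : q.1 = K.zero
      · refine ⟨m, hms.trans (List.sublist_cons_self q r), hmz, ?_⟩
        rw [hq, H.zero_smul] at hu
        rcases hu with rfl
        rw [H.vzero_vadd] at hx
        rcases hx with rfl
        exact hwm
      · refine ⟨q :: m, hms.cons₂ q, ?_, ?_⟩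
        · rintro p hp
          rcases List.mem_cons.1 hp with rfl | hp
          · exact hq
          · exact hmz p hp
        · rw [H.lc_cons]
          exact H.mem_setVadd.2 ⟨u, hu, w, hwm, hx⟩

/-- exchange: if `0 ∈ a∗y # (combination over l)` with `a ≠ 0` then `y` is in the
span of the vectors of `l`. -/
theorem exchange (hsld : H.StronglyLeftDistrib) {a : F} {y : V} {l : List (F × V)}
    (ha : a ≠ K.zero) (h : H.vzero ∈ H.lc ((a, y) :: l))
    {S : Set V} (hl : ∀ p ∈ l, p.2 ∈ S) : y ∈ H.spn S := by
  rw [H.lc_cons] at h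
  obtain ⟨u, hu, r, hr, hz⟩ := H.mem_setVadd.1 h
  have hru : r = H.vneg u := H.eq_vneg hz
  have hur : u = H.vneg r := by rw [hru, H.vneg_vneg]
  have hnr : H.vneg r ∈ H.lc (l.map fun p => (K.mul (K.neg K.one) p.1, p.2)) :=
    H.neg_mem_lc hsld hr
  rw [← hur] at hnr
  obtain ⟨b, hb⟩ := K.exists_inv a ha
  have hy : y ∈ H.smul b u := by
    have hsub : H.smul b u ⊆ H.smul (K.mul b a) y := by
      rw [H.mul_smul b a y]
      intro z hz
      exact Set.mem_biUnion hu hz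
    rw [K.mul_comm, hb, H.one_smul] at hsub
    obtain ⟨z, hz⟩ := H.smul_nonempty b u
    have hz' := hsub hz
    rcases hz' with rfl
    exact hz
  have hy1 : y ∈ H.ssm b (H.lc (l.map fun p => (K.mul (K.neg K.one) p.1, p.2))) :=
    H.mem_ssm.2 ⟨u, hnr, hy⟩
  have hy2 := H.ssm_lc b _ hy1
  refine ⟨_, ?_, hy2⟩
  intro p hp
  simp only [List.map_map, List.mem_map] at hp
  obtain ⟨q, hq, rfl⟩ := hp
  exact hl q hq

/-- list-level linear independence of a set -/
def LIndep (S : Set V) : Prop :=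
  ∀ l : List (F × V), (∀ p ∈ l, p.2 ∈ S) → (l.map Prod.snd).Nodup →
    H.vzero ∈ H.lc l → ∀ p ∈ l, p.1 = K.zero

theorem not_mem_spn_diff (hsld : H.StronglyLeftDistrib) {S : Set V} {x : V}
    (hS : H.LIndep S) (hxS : x ∈ S) (hx : x ∈ H.spn (S \ {x})) : False := by
  obtain ⟨m, hm, hmnd, hxm⟩ := H.exists_nodup_lc hsld hx
  have hneg : H.vneg x ∈ H.lc (m.map fun p => (K.mul (K.neg K.one) p.1, p.2)) :=
    H.neg_mem_lc hsld hxm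
  have hz : H.vzero ∈ H.lc ((K.one, x) :: m.map fun p => (K.mul (K.neg K.one) p.1, p.2)) := by
    rw [H.lc_cons, H.one_smul]
    exact H.mem_setVadd.2 ⟨x, rfl, H.vneg x, hneg, (H.vneg_spec x).1⟩
  have hmem : ∀ p ∈ ((K.one, x) :: m.map fun p => (K.mul (K.neg K.one) p.1, p.2)), p.2 ∈ S := by
    rintro p hp
    rcases List.mem_cons.1 hp with rfl | hp
    · exact hxS
    · obtain ⟨q, hq, rfl⟩ := List.mem_map.1 hp
      exact (hm q hq).1
  have hnd : (((K.one, x) :: m.map fun p => (K.mul (K.neg K.one) p.1, p.2)).map Prod.snd).Nodup := by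
    have hsnd : ((K.one, x) :: m.map fun p => (K.mul (K.neg K.one) p.1, p.2)).map Prod.snd
        = x :: m.map Prod.snd := by
      simp [List.map_map, Function.comp]
    rw [hsnd, List.nodup_cons]
    refine ⟨?_, hmnd⟩
    intro hxmem
    obtain ⟨q, hq, hq2⟩ := List.mem_map.1 hxmem
    exact (hm q hq).2 hq2
  have h1 := hS _ hmem hnd hz (K.one, x) (List.mem_cons_self)
  exact K.one_ne_zero h1

theorem lindep_insert (hsld : H.StronglyLeftDistrib) {S : Set V} {x : V}
    (hS : H.LIndep S) (hx : x ∉ H.spn S) : H.LIndep (insert x S) := by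
  letI : DecidableEq (F × V) := Classical.decEq _
  intro l hl hnd hz p hp
  by_cases hxl : x ∈ l.map Prod.snd
  · obtain ⟨q, hq, hqx⟩ := List.mem_map.1 hxl
    have hperm : l.Perm (q :: l.erase q) := List.perm_cons_erase hq
    have hndp : (l.map Prod.snd).Perm (q.2 :: (l.erase q).map Prod.snd) := by
      simpa using hperm.map Prod.snd
    have hnd2 := hnd.perm hndp
    have hrest : ∀ p' ∈ l.erase q, p'.2 ∈ S := by
      intro p' hp'
      have hmem : p' ∈ l := (List.erase_sublist (l := l) (a := q)).subset hp'
      rcases Set.mem_insert_iff.1 (hl p' hmem) with h | h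
      · exfalso
        have hnotin : q.2 ∉ (l.erase q).map Prod.snd := (List.nodup_cons.1 hnd2).1
        refine hnotin ?_
        rw [hqx, ← h]
        exact List.mem_map_of_mem (f := Prod.snd) hp'
      · exact h
    have hzq : H.vzero ∈ H.lc (q :: l.erase q) := by rwa [H.lc_perm hperm] at hz
    by_cases hq1 : q.1 = K.zero
    · have hzr : H.vzero ∈ H.lc (l.erase q) := by
        rw [H.lc_cons, hq1, H.zero_smul, H.vzero_setVadd] at hzq
        exact hzq
      have hcoef := hS (l.erase q) hrest (List.nodup_cons.1 hnd2).2 hzr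
      rcases List.mem_cons.1 (hperm.mem_iff.1 hp) with rfl | hp'
      · exact hq1
      · exact hcoef p hp'
    · exfalso
      have hy := H.exchange hsld hq1 hzq hrest
      rw [hqx] at hy
      exact hx hy
  · have hl' : ∀ p' ∈ l, p'.2 ∈ S := by
      intro p' hp'
      rcases Set.mem_insert_iff.1 (hl p' hp') with h | h
      · exact absurd (h ▸ List.mem_map_of_mem (f := Prod.snd) hp') hxl
      · exact h
    exact hS l hl' hnd hz p hp

end HypervectorSpace
namespace HypervectorSpace

variable {F : Type u} {V : Type v} {K : Hyperfield F} (H : HypervectorSpace F V K)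

theorem steinitz_aux (hsld : H.StronglyLeftDistrib) {S : Set V} (hSfin : S.Finite)
    (hind : H.LIndep S) :
    ∀ (n : ℕ) (T : Set V), T.Finite → (S \ T).ncard = n → S ⊆ H.spn T →
      S.ncard ≤ T.ncard := by
  intro n
  induction n using Nat.strong_induction_on with
  | _ n ih =>
    intro T hTfin hcard hsub
    rcases Set.eq_empty_or_nonempty (S \ T) with hempty | ⟨x, hxS, hxT⟩
    · have hST : S ⊆ T := by rwa [Set.diff_eq_empty] at hempty
      exact Set.ncard_le_ncard hST hTfin
    · have hxspn : x ∈ H.spn T := hsub hxS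
      obtain ⟨l₀, hl₀T, hl₀nd, hxl₀⟩ := H.exists_nodup_lc hsld hxspn
      obtain ⟨l, hlsub, hlnz, hxl⟩ := H.exists_nonzero_lc hxl₀
      have hlT : ∀ p ∈ l, p.2 ∈ T := fun p hp => hl₀T p (hlsub.subset hp)
      have hlnd : (l.map Prod.snd).Nodup := hl₀nd.sublist (hlsub.map Prod.snd)
      by_cases hcase : ∀ p ∈ l, p.2 ∈ S
      · exfalso
        have hxd : x ∈ H.spn (S \ {x}) := by
          refine ⟨l, ?_, hxl⟩
          intro p hp
          refine ⟨hcase p hp, ?_⟩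
          intro hpx
          have hp2 : p.2 = x := hpx
          exact hxT (hp2 ▸ hlT p hp)
        exact H.not_mem_spn_diff hsld hind hxS hxd
      · push_neg at hcase
        obtain ⟨q, hq, hqS⟩ := hcase
        letI : DecidableEq (F × V) := Classical.decEq _
        have hperm : l.Perm (q :: l.erase q) := List.perm_cons_erase hq
        have hq2notin : q.2 ∉ (l.erase q).map Prod.snd := by
          have hp2 := hperm.map Prod.snd
          rw [List.map_cons] at hp2
          exact (List.nodup_cons.1 (hlnd.perm hp2)).1
        have hzl : H.vzero ∈ H.lc ((K.neg K.one, x) :: l) := by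
          rw [H.lc_cons]
          exact H.mem_setVadd.2
            ⟨H.vneg x, H.neg_mem_neg_one_smul hsld x, x, hxl, (H.vneg_spec x).2⟩
        have hperm2 : ((K.neg K.one, x) :: l).Perm (q :: (K.neg K.one, x) :: l.erase q) :=
          (List.Perm.cons _ hperm).trans (List.Perm.swap q (K.neg K.one, x) (l.erase q))
        have hzq : H.vzero ∈ H.lc (q :: (K.neg K.one, x) :: l.erase q) := by
          rwa [H.lc_perm hperm2] at hzl
        have hq2spn : q.2 ∈ H.spn (insert x (T \ {q.2})) := by
          refine H.exchange hsld (hlnz q hq) hzq ?_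
          rintro p hp
          rcases List.mem_cons.1 hp with rfl | hp
          · exact Set.mem_insert _ _
          · refine Set.mem_insert_of_mem _ ⟨hlT p ((List.erase_sublist (l := l) (a := q)).subset hp), ?_⟩
            intro hpq
            have hp2 : p.2 = q.2 := hpq
            exact hq2notin (hp2 ▸ List.mem_map_of_mem (f := Prod.snd) hp)
        set T₂ : Set V := insert x (T \ {q.2}) with hT₂
        have hT₂fin : T₂.Finite := hTfin.diff.insert x
        have hTsub : T ⊆ H.spn T₂ := by
          intro t ht
          by_cases htq : t = q.2
          · exact htq ▸ hq2spn
          · exact H.subset_spn T₂ (Set.mem_insert_of_mem _ ⟨ht, htq⟩)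
        have hsub2 : S ⊆ H.spn T₂ := fun s hs => H.spn_le_spn hTsub (hsub hs)
        have hq2T : q.2 ∈ T := hlT q hq
        have hmeas : (S \ T₂).ncard < n := by
          have hsubd : S \ T₂ ⊆ (S \ T) \ {x} := by
            rintro s ⟨hsS, hsT₂⟩
            have hsx : s ≠ x := fun h => hsT₂ (h ▸ Set.mem_insert _ _)
            refine ⟨⟨hsS, ?_⟩, hsx⟩
            intro hsT
            have hsq : s ≠ q.2 := fun h => hqS (h ▸ hsS)
            exact hsT₂ (Set.mem_insert_of_mem _ ⟨hsT, hsq⟩)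
          have hfin : ((S \ T) \ {x}).Finite := hSfin.diff.diff
          calc (S \ T₂).ncard ≤ ((S \ T) \ {x}).ncard := Set.ncard_le_ncard hsubd hfin
            _ < (S \ T).ncard :=
              Set.ncard_diff_singleton_lt_of_mem ⟨hxS, hxT⟩ hSfin.diff
            _ = n := hcard
        have hle := ih _ hmeas T₂ hT₂fin rfl hsub2
        have hT₂le : T₂.ncard ≤ T.ncard := by
          calc T₂.ncard ≤ (T \ {q.2}).ncard + 1 := Set.ncard_insert_le _ _
            _ = T.ncard := Set.ncard_diff_singleton_add_one hq2T hTfin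
        exact hle.trans hT₂le

theorem steinitz (hsld : H.StronglyLeftDistrib) {S T : Set V} (hSfin : S.Finite)
    (hTfin : T.Finite) (hind : H.LIndep S) (hsub : S ⊆ H.spn T) :
    S.ncard ≤ T.ncard :=
  H.steinitz_aux hsld hSfin hind _ T hTfin rfl hsub

end HypervectorSpace
namespace HypervectorSpace

variable {F : Type u} {V : Type v} {K : Hyperfield F} (H : HypervectorSpace F V K)

theorem lincomb_eq_lc {n : ℕ} (a : Fin n → F) (β : Fin n → V) :
    H.lincomb a β = H.lc (List.ofFn fun i => (a i, β i)) := by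
  unfold lincomb lc
  rw [List.map_ofFn]
  rfl

theorem hlset_eq_spn (S : Set V) : H.HLSet S = H.spn S := by
  ext x
  constructor
  · intro hx
    simp only [HLSet, HL, Set.mem_iUnion] at hx
    obtain ⟨n, β, hβ, a, hx⟩ := hx
    refine ⟨List.ofFn fun i => (a i, β i), ?_, ?_⟩
    · intro p hp
      obtain ⟨i, hi⟩ := List.mem_ofFn.1 hp
      rw [← hi]
      exact hβ i
    · rwa [← H.lincomb_eq_lc]
  · rintro ⟨l, hl, hx⟩
    simp only [HLSet, HL, Set.mem_iUnion]
    refine ⟨l.length, fun i => (l.get i).2, fun i => hl (l.get i) (l.get_mem i),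
      fun i => (l.get i).1, ?_⟩
    rw [H.lincomb_eq_lc]
    have heq : (List.ofFn fun i => ((l.get i).1, (l.get i).2)) = l := by
      have h2 : (List.ofFn fun i => ((l.get i).1, (l.get i).2)) = List.ofFn l.get := by
        congr
      rw [h2, List.ofFn_get]
    rwa [heq]

theorem lindepSet_iff_lindep (S : Set V) : H.LinIndepSet S ↔ H.LIndep S := by
  constructor
  · intro h l hl hnd hz p hp
    have hmapeq : l.map Prod.snd = List.ofFn fun i => (l.get i).2 := by
      conv_lhs => rw [← List.ofFn_get l]
      rw [List.map_ofFn]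
      rfl
    have hinj : Function.Injective fun i => (l.get i).2 := by
      rw [← List.nodup_ofFn, ← hmapeq]
      exact hnd
    have hnd2 := h l.length (fun i => (l.get i).2) hinj
      (fun i => hl (l.get i) (l.get_mem i))
    by_contra hne
    refine hnd2 ?_
    obtain ⟨i, hi⟩ := List.mem_iff_get.1 hp
    refine ⟨fun i => (l.get i).1, ⟨i, show (l.get i).1 ≠ K.zero by rw [hi]; exact hne⟩, ?_⟩
    rw [H.lincomb_eq_lc]
    have heq : (List.ofFn fun i => ((l.get i).1, (l.get i).2)) = l := by
      have h2 : (List.ofFn fun i => ((l.get i).1, (l.get i).2)) = List.ofFn l.get := by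
        congr
      rw [h2, List.ofFn_get]
    rwa [heq]
  · intro h n β hinj hβ hdep
    obtain ⟨a, ⟨i₀, hi₀⟩, hz⟩ := hdep
    rw [H.lincomb_eq_lc] at hz
    have hall := h (List.ofFn fun i => (a i, β i)) ?_ ?_ hz (a i₀, β i₀)
      (List.mem_ofFn.2 ⟨i₀, rfl⟩)
    · exact hi₀ hall
    · intro p hp
      obtain ⟨i, hi⟩ := List.mem_ofFn.1 hp
      rw [← hi]
      exact hβ i
    · rw [List.map_ofFn]
      refine List.nodup_ofFn.2 ?_
      intro i j hij
      exact hinj (by exact hij)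

theorem isBasisOf_iff {B X : Set V} :
    H.IsBasisOf B X ↔ B ⊆ X ∧ H.LIndep B ∧ X ⊆ H.spn B := by
  rw [IsBasisOf, H.lindepSet_iff_lindep, H.hlset_eq_spn]

theorem lindep_empty : H.LIndep (∅ : Set V) := by
  intro l hl _ _ p hp
  exact absurd (hl p hp) (Set.notMem_empty _)

/-- extension of an independent set to a basis (with fuel) -/
theorem extend_aux (hsld : H.StronglyLeftDistrib) {X T₀ : Set V}
    (hXspn : X ⊆ H.spn T₀) (hT₀fin : T₀.Finite) :
    ∀ (k : ℕ) (C : Set V), C.Finite → H.LIndep C → C ⊆ X →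
      T₀.ncard - C.ncard ≤ k →
      ∃ B, C ⊆ B ∧ B ⊆ X ∧ B.Finite ∧ H.LIndep B ∧ X ⊆ H.spn B := by
  intro k
  induction k with
  | zero =>
      intro C hCfin hCind hCX hk
      by_cases hXC : X ⊆ H.spn C
      · exact ⟨C, subset_rfl, hCX, hCfin, hCind, hXC⟩
      · exfalso
        obtain ⟨x, hxX, hxC⟩ := Set.not_subset.1 hXC
        have hx_notC : x ∉ C := fun h => hxC (H.subset_spn C h)
        have hins : H.LIndep (insert x C) := H.lindep_insert hsld hCind hxC
        have hcard : (insert x C).ncard ≤ T₀.ncard :=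
          H.steinitz hsld (hCfin.insert x) hT₀fin hins
            (fun s hs => by
              rcases Set.mem_insert_iff.1 hs with rfl | hs
              · exact hXspn hxX
              · exact hXspn (hCX hs))
        rw [Set.ncard_insert_of_notMem hx_notC hCfin] at hcard
        omega
  | succ k ih =>
      intro C hCfin hCind hCX hk
      by_cases hXC : X ⊆ H.spn C
      · exact ⟨C, subset_rfl, hCX, hCfin, hCind, hXC⟩
      · obtain ⟨x, hxX, hxC⟩ := Set.not_subset.1 hXC
        have hx_notC : x ∉ C := fun h => hxC (H.subset_spn C h)
        have hins : H.LIndep (insert x C) := H.lindep_insert hsld hCind hxC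
        have hCX' : insert x C ⊆ X := by
          rintro s hs
          rcases Set.mem_insert_iff.1 hs with rfl | hs
          · exact hxX
          · exact hCX hs
        have hcard : (insert x C).ncard = C.ncard + 1 :=
          Set.ncard_insert_of_notMem hx_notC hCfin
        have hk' : T₀.ncard - (insert x C).ncard ≤ k := by omega
        obtain ⟨B, hB1, hB2, hB3, hB4, hB5⟩ :=
          ih (insert x C) (hCfin.insert x) hins hCX' hk'
        exact ⟨B, (Set.subset_insert x C).trans hB1, hB2, hB3, hB4, hB5⟩

theorem extend (hsld : H.StronglyLeftDistrib) {X T₀ C : Set V}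
    (hXspn : X ⊆ H.spn T₀) (hT₀fin : T₀.Finite) (hCfin : C.Finite)
    (hCind : H.LIndep C) (hCX : C ⊆ X) :
    ∃ B, C ⊆ B ∧ B ⊆ X ∧ B.Finite ∧ H.LIndep B ∧ X ⊆ H.spn B :=
  H.extend_aux hsld hXspn hT₀fin _ C hCfin hCind hCX le_rfl

end HypervectorSpace
namespace HypervectorSpace

variable {F : Type u} {V : Type v} {K : Hyperfield F} (H : HypervectorSpace F V K)

theorem inter_isSubspace {U W : Set V} (hU : H.IsHypersubspace U)
    (hW : H.IsHypersubspace W) : H.IsHypersubspace (U ∩ W) := by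
  refine ⟨?_, ?_, ⟨hU.2.2.1, hW.2.2.1⟩, ?_⟩
  · intro α hα β hβ
    exact Set.subset_inter (hU.1 α hα.1 β hβ.1) (hW.1 α hα.2 β hβ.2)
  · intro a α hα
    exact Set.subset_inter (hU.2.1 a α hα.1) (hW.2.1 a α hα.2)
  · intro α hα
    exact ⟨hU.2.2.2 α hα.1, hW.2.2.2 α hα.2⟩

theorem lc_union_subset {U W : Set V} (hU : H.IsHypersubspace U)
    (hW : H.IsHypersubspace W) {l : List (F × V)} (hl : ∀ p ∈ l, p.2 ∈ U ∪ W) :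
    H.lc l ⊆ H.setVadd U W := by
  induction l with
  | nil =>
      intro x hx
      rcases hx with rfl
      refine H.vadd_subset_setVadd hU.2.2.1 hW.2.2.1 ?_
      rw [H.vadd_vzero]; rfl
  | cons q r ih =>
      rw [H.lc_cons]
      intro x hx
      obtain ⟨u, hu, s, hs, hx⟩ := H.mem_setVadd.1 hx
      have hsUW := ih (fun p hp => hl p (List.mem_cons_of_mem q hp)) hs
      obtain ⟨u', hu', w', hw', hs'⟩ := H.mem_setVadd.1 hsUW
      rcases hl q (List.mem_cons_self) with hq | hq
      · -- u ∈ U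
        have huU : u ∈ U := hU.2.1 q.1 q.2 hq hu
        obtain ⟨t, ht, hxt⟩ := H.mem_assoc_iff.2 ⟨s, hs', hx⟩
        exact H.vadd_subset_setVadd (hU.1 u huU u' hu' ht) hw' hxt
      · -- u ∈ W
        have huW : u ∈ W := hW.2.1 q.1 q.2 hq hu
        have hs'' : s ∈ H.vadd w' u' := by rwa [H.vadd_comm] at hs'
        obtain ⟨t, ht, hxt⟩ := H.mem_assoc_iff.2 ⟨s, hs'', hx⟩
        have hxt' : x ∈ H.vadd u' t := by rwa [H.vadd_comm] at hxt
        exact H.vadd_subset_setVadd hu' (hW.1 u huW w' hw' ht) hxt'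

theorem setVadd_eq_spn_union {U W : Set V} (hU : H.IsHypersubspace U)
    (hW : H.IsHypersubspace W) : H.setVadd U W = H.spn (U ∪ W) := by
  apply Set.Subset.antisymm
  · intro x hx
    obtain ⟨u, hu, w, hw, hx⟩ := H.mem_setVadd.1 hx
    exact H.vadd_subset_spn (H.subset_spn _ (Set.mem_union_left W hu))
      (H.subset_spn _ (Set.mem_union_right U hw)) hx
  · rintro x ⟨l, hl, hx⟩
    exact H.lc_union_subset hU hW hl hx

theorem lindep_union (hsld : H.StronglyLeftDistrib) {U W BI B₁ B₂ : Set V}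
    (hU : H.IsHypersubspace U) (hW : H.IsHypersubspace W)
    (hB₁U : B₁ ⊆ U) (hB₂W : B₂ ⊆ W)
    (hBIB₁ : BI ⊆ B₁) (hBIB₂ : BI ⊆ B₂)
    (hI : U ∩ W ⊆ H.spn BI)
    (h₁ : H.LIndep B₁) (h₂ : H.LIndep B₂) : H.LIndep (B₁ ∪ B₂) := by
  intro l hl hnd hz p hp
  letI : ∀ p : F × V, Decidable (p.2 ∈ B₁) := fun p => Classical.dec _
  set l₁ := l.filter (fun p => decide (p.2 ∈ B₁)) with hl₁def
  set l₂ := l.filter (fun p => !decide (p.2 ∈ B₁)) with hl₂def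
  have hperm : (l₁ ++ l₂).Perm l := List.filter_append_perm _ l
  have hmem₁ : ∀ p ∈ l₁, p ∈ l ∧ p.2 ∈ B₁ := by
    intro p hp
    have := List.mem_filter.1 hp
    exact ⟨this.1, by simpa using this.2⟩
  have hmem₂ : ∀ p ∈ l₂, p ∈ l ∧ p.2 ∉ B₁ := by
    intro p hp
    have := List.mem_filter.1 hp
    exact ⟨this.1, by simpa using this.2⟩
  have hmem₂' : ∀ p ∈ l₂, p.2 ∈ B₂ := by
    intro p hp
    rcases hl p (hmem₂ p hp).1 with h | h
    · exact absurd h (hmem₂ p hp).2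
    · exact h
  have hz' : H.vzero ∈ H.lc (l₁ ++ l₂) := by rwa [H.lc_perm hperm]
  rw [H.lc_append] at hz'
  obtain ⟨uu, hu, ww, hw, hθ⟩ := H.mem_setVadd.1 hz'
  have huU : uu ∈ U :=
    H.lc_subset_subspace hU (fun q hq => hB₁U (hmem₁ q hq).2) hu
  have hwW : ww ∈ W :=
    H.lc_subset_subspace hW (fun q hq => hB₂W (hmem₂' q hq)) hw
  have hww : ww = H.vneg uu := H.eq_vneg hθ
  have hwU : ww ∈ U := hww ▸ hU.2.2.2 uu huU
  have hwspn : ww ∈ H.spn BI := hI ⟨hwU, hwW⟩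
  obtain ⟨m, hmBI, hmnd, hwm⟩ := H.exists_nodup_lc hsld hwspn
  have hnegw : H.vneg ww ∈ H.lc (m.map fun q => (K.mul (K.neg K.one) q.1, q.2)) :=
    H.neg_mem_lc hsld hwm
  set negm := m.map fun q => (K.mul (K.neg K.one) q.1, q.2) with hnegmdef
  have hz2 : H.vzero ∈ H.lc (negm ++ l₂) := by
    rw [H.lc_append]
    exact H.mem_setVadd.2 ⟨H.vneg ww, hnegw, ww, hw, (H.vneg_spec ww).2⟩
  have hsndnegm : negm.map Prod.snd = m.map Prod.snd := by
    simp [hnegmdef, List.map_map, Function.comp]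
  have hsndl₂ : (l₂.map Prod.snd).Nodup :=
    hnd.sublist ((List.filter_sublist (l := l)).map Prod.snd)
  have hndapp : ((negm ++ l₂).map Prod.snd).Nodup := by
    rw [List.map_append, hsndnegm]
    refine List.Nodup.append hmnd hsndl₂ ?_
    intro a ha ha₂
    obtain ⟨q, hq, rfl⟩ := List.mem_map.1 ha
    have haB₁ : q.2 ∈ B₁ := hBIB₁ (hmBI q hq)
    obtain ⟨q', hq', hqq'⟩ := List.mem_map.1 ha₂
    exact (hmem₂ q' hq').2 (hqq' ▸ haB₁)
  have hmemapp : ∀ q ∈ negm ++ l₂, q.2 ∈ B₂ := by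
    intro q hq
    rcases List.mem_append.1 hq with h | h
    · obtain ⟨q', hq', rfl⟩ := List.mem_map.1 h
      exact hBIB₂ (hmBI q' hq')
    · exact hmem₂' q h
  have hall₂ := h₂ (negm ++ l₂) hmemapp hndapp hz2
  have hzero₂ : ∀ q ∈ l₂, q.1 = K.zero := fun q hq =>
    hall₂ q (List.mem_append.2 (Or.inr hq))
  have hwzero : ww = H.vzero := by
    have := H.lc_zero hzero₂
    rw [this] at hw
    exact hw
  have huzero : uu = H.vzero := by
    rw [hwzero, H.vadd_vzero] at hθ
    exact hθ.symm
  have hz₁ : H.vzero ∈ H.lc l₁ := huzero ▸ hu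
  have hsndl₁ : (l₁.map Prod.snd).Nodup :=
    hnd.sublist ((List.filter_sublist (l := l)).map Prod.snd)
  have hzero₁ := h₁ l₁ (fun q hq => (hmem₁ q hq).2) hsndl₁ hz₁
  rcases List.mem_append.1 (hperm.symm.subset hp) with h | h
  · exact hzero₁ p h
  · exact hzero₂ p h

end HypervectorSpace


/-- Dimension theorem: if `U` and `W` are finite-dimensional hypersubspaces of a
strongly left distributive hypervector space `V`, then `U # W` is a
finite-dimensional hypersubspace of `V` and
`dim(U # W) = dim(U) + dim(W) − dim(U ∩ W)`, i.e. there are finite bases `B` of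
`U # W` and `BI` of `U ∩ W` with `|B| + |BI| = |BU| + |BW|`. -/
theorem HypervectorSpace.dimension_theorem {F : Type u} {V : Type v}
    {K : Hyperfield F} (H : HypervectorSpace F V K)
    (hsld : H.StronglyLeftDistrib) (U W : Set V)
    (hU : H.IsHypersubspace U) (hW : H.IsHypersubspace W)
    (BU : Set V) (hBUfin : BU.Finite) (hBU : H.IsBasisOf BU U)
    (BW : Set V) (hBWfin : BW.Finite) (hBW : H.IsBasisOf BW W) :
    H.IsHypersubspace (H.setVadd U W) ∧
      ∃ B BI : Set V, B.Finite ∧ BI.Finite ∧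
        H.IsBasisOf B (H.setVadd U W) ∧ H.IsBasisOf BI (U ∩ W) ∧
        B.ncard + BI.ncard = BU.ncard + BW.ncard := by
  obtain ⟨hBUsub, hBUind, hUspn⟩ := H.isBasisOf_iff.1 hBU
  obtain ⟨hBWsub, hBWind, hWspn⟩ := H.isBasisOf_iff.1 hBW
  have hsubspace : H.IsHypersubspace (H.setVadd U W) := by
    rw [H.setVadd_eq_spn_union hU hW]
    exact H.spn_isSubspace hsld _
  refine ⟨hsubspace, ?_⟩
  -- a basis of U ∩ W
  have hIspnBU : U ∩ W ⊆ H.spn BU := fun x hx => hUspn hx.1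
  obtain ⟨BI, -, hBI_I, hBIfin, hBIind, hIspnBI⟩ :=
    H.extend hsld hIspnBU hBUfin Set.finite_empty H.lindep_empty (Set.empty_subset _)
  -- extend BI to a basis of U
  obtain ⟨B₁, hBIB₁, hB₁U, hB₁fin, hB₁ind, hUspnB₁⟩ :=
    H.extend hsld hUspn hBUfin hBIfin hBIind (hBI_I.trans Set.inter_subset_left)
  -- extend BI to a basis of W
  have hIspnBW : U ∩ W ⊆ H.spn BW := fun x hx => hWspn hx.2
  obtain ⟨B₂, hBIB₂, hB₂W, hB₂fin, hB₂ind, hWspnB₂⟩ :=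
    H.extend hsld hWspn hBWfin hBIfin hBIind (hBI_I.trans Set.inter_subset_right)
  -- dimension invariance
  have hB₁card : B₁.ncard = BU.ncard := by
    refine le_antisymm ?_ ?_
    · exact H.steinitz hsld hB₁fin hBUfin hB₁ind fun x hx => hUspn (hB₁U hx)
    · exact H.steinitz hsld hBUfin hB₁fin hBUind fun x hx => hUspnB₁ (hBUsub hx)
  have hB₂card : B₂.ncard = BW.ncard := by
    refine le_antisymm ?_ ?_
    · exact H.steinitz hsld hB₂fin hBWfin hB₂ind fun x hx => hWspn (hB₂W hx)
    · exact H.steinitz hsld hBWfin hB₂fin hBWind fun x hx => hWspnB₂ (hBWsub hx)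
  refine ⟨B₁ ∪ B₂, BI, hB₁fin.union hB₂fin, hBIfin, ?_, ?_, ?_⟩
  · -- B₁ ∪ B₂ is a basis of U # W
    refine H.isBasisOf_iff.2 ⟨?_, ?_, ?_⟩
    · rintro b (hb | hb)
      · refine H.vadd_subset_setVadd (hB₁U hb) hW.2.2.1 ?_
        rw [H.vadd_vzero]; rfl
      · refine H.vadd_subset_setVadd hU.2.2.1 (hB₂W hb) ?_
        rw [H.vzero_vadd]; rfl
    · exact H.lindep_union hsld hU hW hB₁U hB₂W hBIB₁ hBIB₂ hIspnBI hB₁ind hB₂ind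
    · intro x hx
      obtain ⟨a, ha, b, hb, hx⟩ := H.mem_setVadd.1 hx
      exact H.vadd_subset_spn
        (H.spn_mono Set.subset_union_left (hUspnB₁ ha))
        (H.spn_mono Set.subset_union_right (hWspnB₂ hb)) hx
  · exact H.isBasisOf_iff.2 ⟨hBI_I, hBIind, hIspnBI⟩
  · -- cardinality count
    have hInter : B₁ ∩ B₂ = BI := by
      apply Set.Subset.antisymm
      · intro x hx
        by_contra hxBI
        have hxI : x ∈ U ∩ W := ⟨hB₁U hx.1, hB₂W hx.2⟩
        have hxspn : x ∈ H.spn (B₁ \ {x}) := by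
          refine H.spn_mono ?_ (hIspnBI hxI)
          intro b hb
          exact ⟨hBIB₁ hb, fun h => hxBI (h ▸ hb)⟩
        exact absurd (H.not_mem_spn_diff hsld hB₁ind hx.1 hxspn) not_false
      · exact Set.subset_inter hBIB₁ hBIB₂
    have := Set.ncard_union_add_ncard_inter B₁ B₂ hB₁fin hB₂fin
    rw [hInter] at this
    rw [this, hB₁card, hB₂card]
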